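/- In a tribe, every anodyne morphism is a homotopy equivalence. Concretely, if f : x → y is anodyne, then there exists a retraction r : y → x with r∘f = id_x, and f∘r is homotopic to id_y via a homotopy obtained by lifting against the path fibration Py → y × y. -/

import Mathlib

open CategoryTheory CategoryTheory.Limits

universe v u

namespace Paper

variable {T : Type u} [Category.{v} T]

/-- A morphism is anodyne (w.r.t. a class of fibrations) if it has the left
lifting property against all fibrations. -/
def Anodyne (Fib : MorphismProperty T) : MorphismProperty T :=
  fun _ _ i => ∀ ⦃u w : T⦄ (g : u ⟶ w), Fib g → HasLiftingProperty i g

/-- A tribe structure on a category `T`. -/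
structure TribeStruct (T : Type u) [Category.{v} T] where
  /-- fibrations -/
  Fib : MorphismProperty T
  fib_id : ∀ x : T, Fib (𝟙 x)
  fib_comp : ∀ {x y z : T} (f : x ⟶ y) (g : y ⟶ z), Fib f → Fib g → Fib (f ≫ g)
  /-- (T1): terminal object, all objects fibrant -/
  term : T
  isTerminal : IsTerminal term
  all_fibrant : ∀ x : T, Fib (isTerminal.from x)
  /-- (T2): pullbacks along fibrations exist and fibrations are stable -/
  pullback_exists : ∀ {x y z : T} (f : x ⟶ z) (g : y ⟶ z), Fib g → HasPullback f g
  fib_stable : ∀ {p x y z : T} {fst : p ⟶ x} {snd : p ⟶ y} {f : x ⟶ z} {g : y ⟶ z},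
    IsPullback fst snd f g → Fib g → Fib fst
  /-- (T3): factorization as anodyne followed by fibration -/
  factor : ∀ {x y : T} (f : x ⟶ y), ∃ (z : T) (i : x ⟶ z) (q : z ⟶ y),
    Anodyne Fib i ∧ Fib q ∧ i ≫ q = f
  /-- (T4): anodyne morphisms are stable under pullback along fibrations -/
  anodyne_stable : ∀ {p x y z : T} {fst : p ⟶ x} {snd : p ⟶ y} {f : x ⟶ z} {g : y ⟶ z},
    IsPullback fst snd f g → Anodyne Fib f → Fib g → Anodyne Fib snd

/-- A path object for `x` in a tribe: a factorization of the diagonal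
`x → x × x` as an anodyne morphism followed by a fibration (the product is
presented by an explicit binary product cone). -/
structure PathObject (R : TribeStruct T) (x : T) where
  P : T
  σ : x ⟶ P
  π₀ : P ⟶ x
  π₁ : P ⟶ x
  σ_anodyne : Anodyne R.Fib σ
  σ_π₀ : σ ≫ π₀ = 𝟙 x
  σ_π₁ : σ ≫ π₁ = 𝟙 x
  prod : T
  p₀ : prod ⟶ x
  p₁ : prod ⟶ x
  isProd : IsLimit (BinaryFan.mk p₀ p₁)
  π : P ⟶ prod
  π_p₀ : π ≫ p₀ = π₀
  π_p₁ : π ≫ p₁ = π₁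
  π_fib : R.Fib π

/-- Homotopy of morphisms in a tribe. -/
def Homotopic (R : TribeStruct T) {x y : T} (f g : x ⟶ y) : Prop :=
  ∃ (Po : PathObject R y) (H : x ⟶ Po.P), H ≫ Po.π₀ = f ∧ H ≫ Po.π₁ = g

/-- Homotopy equivalences in a tribe. -/
def IsHtpyEquiv (R : TribeStruct T) {x y : T} (f : x ⟶ y) : Prop :=
  ∃ g : y ⟶ x, Homotopic R (f ≫ g) (𝟙 x) ∧ Homotopic R (g ≫ f) (𝟙 y)

/-- Homotopy equivalences (= weak equivalences) of a tribe as a morphism property. -/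
def hW (R : TribeStruct T) : MorphismProperty T :=
  fun _ _ f => IsHtpyEquiv R f

end Paper

open Paper

/-- Every object has a path object. -/
lemma exists_pathObject {T : Type u} [Category.{v} T] (R : TribeStruct T) (z : T) :
    ∃ _ : PathObject R z, True := by
  haveI := R.pullback_exists (R.isTerminal.from z) (R.isTerminal.from z) (R.all_fibrant z)
  let W := pullback (R.isTerminal.from z) (R.isTerminal.from z)
  let p₀ : W ⟶ z := pullback.fst _ _
  let p₁ : W ⟶ z := pullback.snd _ _
  have isProd : IsLimit (BinaryFan.mk p₀ p₁) := by
    apply isProductOfIsTerminalIsPullback _ _ _ _ R.isTerminal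
    have := pullbackIsPullback (R.isTerminal.from z) (R.isTerminal.from z)
    convert this
  -- diagonal
  let δ : z ⟶ W := isProd.lift (BinaryFan.mk (𝟙 z) (𝟙 z))
  have hδ₀ : δ ≫ p₀ = 𝟙 z := isProd.fac (BinaryFan.mk (𝟙 z) (𝟙 z)) ⟨WalkingPair.left⟩
  have hδ₁ : δ ≫ p₁ = 𝟙 z := isProd.fac (BinaryFan.mk (𝟙 z) (𝟙 z)) ⟨WalkingPair.right⟩
  obtain ⟨P, i, q, hi, hq, hiq⟩ := R.factor δ
  refine ⟨⟨P, i, q ≫ p₀, q ≫ p₁, hi, ?_, ?_, W, p₀, p₁, isProd, q, rfl, rfl, hq⟩, trivial⟩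
  · rw [← Category.assoc, hiq, hδ₀]
  · rw [← Category.assoc, hiq, hδ₁]

open Paper in
/-- In a tribe, every anodyne morphism is a homotopy
equivalence; concretely, it admits a retraction `r` with `r ∘ f = id`, and
`f ∘ r` is homotopic to the identity. -/
theorem anodyne_isHtpyEquiv {T : Type u} [Category.{v} T] (R : Paper.TribeStruct T)
    {x y : T} (f : x ⟶ y) (hf : Anodyne R.Fib f) :
    IsHtpyEquiv R f ∧ ∃ r : y ⟶ x, f ≫ r = 𝟙 x ∧ Homotopic R (r ≫ f) (𝟙 y) := by
  -- retraction
  haveI := hf (R.isTerminal.from x) (R.all_fibrant x)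
  have sq : CommSq (𝟙 x) f (R.isTerminal.from x) (R.isTerminal.from y) :=
    ⟨R.isTerminal.hom_ext _ _⟩
  let r : y ⟶ x := sq.lift
  have hfr : f ≫ r = 𝟙 x := sq.fac_left
  -- homotopy r ≫ f ∼ 𝟙 y
  obtain ⟨Po, -⟩ := exists_pathObject R y
  let b : y ⟶ Po.prod := Po.isProd.lift (BinaryFan.mk (r ≫ f) (𝟙 y))
  have hb₀ : b ≫ Po.p₀ = r ≫ f := Po.isProd.fac _ ⟨WalkingPair.left⟩
  have hb₁ : b ≫ Po.p₁ = 𝟙 y := Po.isProd.fac _ ⟨WalkingPair.right⟩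
  haveI := hf Po.π Po.π_fib
  have sq2 : CommSq (f ≫ Po.σ) f Po.π b := by
    constructor
    apply BinaryFan.IsLimit.hom_ext Po.isProd
    · simp only [BinaryFan.mk_fst, Category.assoc, Po.π_p₀, hb₀]
      show (f ≫ Po.σ ≫ Po.π) ≫ Po.p₀ = (f ≫ b) ≫ Po.p₀
      simp only [Category.assoc, Po.π_p₀, hb₀]
      rw [Po.σ_π₀, Category.comp_id, ← Category.assoc, hfr, Category.id_comp]
    · simp only [BinaryFan.mk_snd, Category.assoc, Po.π_p₁, hb₁, Category.comp_id]
      show (f ≫ Po.σ ≫ Po.π) ≫ Po.p₁ = (f ≫ b) ≫ Po.p₁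
      simp only [Category.assoc, Po.π_p₁, hb₁, Category.comp_id]
      rw [Po.σ_π₁, Category.comp_id]
  let H : y ⟶ Po.P := sq2.lift
  have hH : H ≫ Po.π = b := sq2.fac_right
  have hrf : Homotopic R (r ≫ f) (𝟙 y) := by
    refine ⟨Po, H, ?_, ?_⟩
    · rw [← Po.π_p₀, ← Category.assoc, hH, hb₀]
    · rw [← Po.π_p₁, ← Category.assoc, hH, hb₁]
  -- homotopy f ≫ r ∼ 𝟙 x
  obtain ⟨Px, -⟩ := exists_pathObject R x
  have hid : Homotopic R (f ≫ r) (𝟙 x) := by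
    rw [hfr]
    exact ⟨Px, Px.σ, Px.σ_π₀, Px.σ_π₁⟩
  exact ⟨⟨r, hid, hrf⟩, r, hfr, hrf⟩
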